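/- arXiv:1603.09535 — 3 statements merged into one kernel-verified Lean document; each statement's English description precedes it below -/
import Mathlib

section
/- Let p ≥ 0 be an integer and 0 < ε₁ < 1/2. For any three points a, b, c in a metric space, dist(a,b)^p ≤ (1+ε₁)^p · (dist(a,c)^p + dist(c,b)^p / ε₁^p). -/
theorem stmt_0 {X : Type*} [MetricSpace X] (p : ℕ) (ε₁ : ℝ)
    (hε₁ : 0 < ε₁) (hε₁' : ε₁ < 1/2) (a b c : X) :
    dist a b ^ p ≤ (1 + ε₁) ^ p * (dist a c ^ p + dist c b ^ p / ε₁ ^ p) := by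
  have hd : dist a b ≤ dist a c + dist c b := dist_triangle a c b
  have h1 : (0:ℝ) ≤ 1 + ε₁ := by linarith
  rcases le_or_gt (dist c b) (ε₁ * dist a c) with h | h
  · have key : dist a b ≤ (1 + ε₁) * dist a c := by linarith
    calc dist a b ^ p ≤ ((1 + ε₁) * dist a c) ^ p :=
          pow_le_pow_left₀ dist_nonneg key p
      _ = (1 + ε₁) ^ p * dist a c ^ p := mul_pow _ _ _
      _ ≤ (1 + ε₁) ^ p * (dist a c ^ p + dist c b ^ p / ε₁ ^ p) := by
          apply mul_le_mul_of_nonneg_left _ (pow_nonneg h1 p)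
          have : 0 ≤ dist c b ^ p / ε₁ ^ p :=
            div_nonneg (pow_nonneg dist_nonneg p) (pow_nonneg hε₁.le p)
          linarith
  · have hac : dist a c < dist c b / ε₁ := (lt_div_iff₀ hε₁).mpr (by linarith [mul_comm ε₁ (dist a c)])
    have key : dist a b ≤ (1 + ε₁) * (dist c b / ε₁) := by
      have : dist c b = ε₁ * (dist c b / ε₁) := by field_simp
      nlinarith [dist_nonneg (x := c) (y := b)]
    calc dist a b ^ p ≤ ((1 + ε₁) * (dist c b / ε₁)) ^ p :=
          pow_le_pow_left₀ dist_nonneg key p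
      _ = (1 + ε₁) ^ p * (dist c b ^ p / ε₁ ^ p) := by rw [mul_pow, div_pow]
      _ ≤ (1 + ε₁) ^ p * (dist a c ^ p + dist c b ^ p / ε₁ ^ p) := by
          apply mul_le_mul_of_nonneg_left _ (pow_nonneg h1 p)
          have : 0 ≤ dist a c ^ p := pow_nonneg dist_nonneg p
          linarith
end

section
/- Let G be an edge-weighted undirected connected graph, S a subset of vertices, and fix a priority ordering on V(G). For each v ∈ S, let V_S(v) be the Voronoi cell of v: the set of vertices closer (in shortest-path distance) to v than to any other vertex of S, breaking ties in favor of higher priority. Then for every v ∈ S, the induced subgraph G[V_S(v)] is connected. -/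
/-- The weighted length of a walk: the sum of the weights of its edges. -/
noncomputable def walkWeight {V : Type*} {G : SimpleGraph V} (w : V → V → ℝ)
    {u v : V} (p : G.Walk u v) : ℝ :=
  (p.darts.map fun d => w d.toProd.1 d.toProd.2).sum

/-- The shortest-path distance in an edge-weighted graph. -/
noncomputable def wdist {V : Type*} (G : SimpleGraph V) (w : V → V → ℝ) (u v : V) : ℝ :=
  sInf {r : ℝ | ∃ p : G.Walk u v, r = walkWeight w p}

/-- The Voronoi cell of a center `v ∈ S`: vertices strictly closer to `v` than to any
other center, ties broken in favor of higher priority (smaller `pr`). -/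
def voronoiCell {V : Type*} (G : SimpleGraph V) (w : V → V → ℝ) (pr : V → ℕ)
    (S : Set V) (v : V) : Set V :=
  {u : V | ∀ x ∈ S, x ≠ v →
    wdist G w u v < wdist G w u x ∨ (wdist G w u v = wdist G w u x ∧ pr v < pr x)}

open SimpleGraph

section Aux

variable {V : Type*} {G : SimpleGraph V} {w : V → V → ℝ}

lemma walkWeight_nil {u : V} : walkWeight w (Walk.nil : G.Walk u u) = 0 := by
  simp [walkWeight]

lemma walkWeight_cons {u x v : V} (h : G.Adj u x) (p : G.Walk x v) :
    walkWeight w (Walk.cons h p) = w u x + walkWeight w p := by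
  simp [walkWeight]

lemma walkWeight_append {u x v : V} (p : G.Walk u x) (q : G.Walk x v) :
    walkWeight w (p.append q) = walkWeight w p + walkWeight w q := by
  simp [walkWeight, Walk.darts_append]

lemma walkWeight_nonneg (hwpos : ∀ u v, G.Adj u v → 0 < w u v) {u v : V} (p : G.Walk u v) :
    0 ≤ walkWeight w p := by
  apply List.sum_nonneg
  intro x hx
  simp only [List.mem_map] at hx
  obtain ⟨d, _, rfl⟩ := hx
  exact (hwpos _ _ d.adj).le

lemma walkWeight_dropUntil_le [DecidableEq V] (hwpos : ∀ u v, G.Adj u v → 0 < w u v)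
    {u v : V} (p : G.Walk u v) (x : V) (hx : x ∈ p.support) :
    walkWeight w (p.dropUntil x hx) ≤ walkWeight w p := by
  have := p.take_spec hx
  have h2 : walkWeight w p =
      walkWeight w (p.takeUntil x hx) + walkWeight w (p.dropUntil x hx) := by
    conv_lhs => rw [← this]
    rw [walkWeight_append]
  have := walkWeight_nonneg hwpos (p.takeUntil x hx)
  linarith

lemma walkWeight_bypass_le [DecidableEq V] (hwpos : ∀ u v, G.Adj u v → 0 < w u v)
    {u v : V} (p : G.Walk u v) : walkWeight w p.bypass ≤ walkWeight w p := by
  induction p with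
  | nil => simp [Walk.bypass]
  | @cons a b c h q ih =>
    rw [Walk.bypass]
    split_ifs with hb
    · calc walkWeight w (q.bypass.dropUntil a hb) ≤ walkWeight w q.bypass :=
            walkWeight_dropUntil_le hwpos _ _ hb
        _ ≤ walkWeight w q := ih
        _ ≤ walkWeight w (Walk.cons h q) := by
            rw [walkWeight_cons]; linarith [hwpos _ _ h]
    · rw [walkWeight_cons, walkWeight_cons]; linarith

lemma wdist_set_nonempty (hG : G.Connected) (u v : V) :
    {r : ℝ | ∃ p : G.Walk u v, r = walkWeight w p}.Nonempty := by
  obtain ⟨p⟩ := hG.preconnected u v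
  exact ⟨walkWeight w p, p, rfl⟩

lemma wdist_set_bddBelow (hwpos : ∀ u v, G.Adj u v → 0 < w u v) (u v : V) :
    BddBelow {r : ℝ | ∃ p : G.Walk u v, r = walkWeight w p} := by
  refine ⟨0, ?_⟩
  rintro r ⟨p, rfl⟩
  exact walkWeight_nonneg hwpos p

lemma wdist_le_walkWeight (hwpos : ∀ u v, G.Adj u v → 0 < w u v) {u v : V} (p : G.Walk u v) :
    wdist G w u v ≤ walkWeight w p :=
  csInf_le (wdist_set_bddBelow hwpos u v) ⟨p, rfl⟩

lemma wdist_nonneg (hG : G.Connected) (hwpos : ∀ u v, G.Adj u v → 0 < w u v) (u v : V) :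
    0 ≤ wdist G w u v :=
  le_csInf (wdist_set_nonempty hG u v) (by rintro r ⟨p, rfl⟩; exact walkWeight_nonneg hwpos p)

lemma wdist_exists [Fintype V] (hG : G.Connected) (hwpos : ∀ u v, G.Adj u v → 0 < w u v)
    (u v : V) : ∃ p : G.Walk u v, walkWeight w p = wdist G w u v := by
  classical
  obtain ⟨p0⟩ := hG.preconnected u v
  -- minimize over paths
  obtain ⟨q0, _, hq0⟩ := Set.exists_min_image (Set.univ : Set (G.Path u v))
    (fun q => walkWeight w q.1) Set.finite_univ ⟨⟨p0.bypass, p0.bypass_isPath⟩, Set.mem_univ _⟩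
  refine ⟨q0.1, le_antisymm ?_ (wdist_le_walkWeight hwpos q0.1)⟩
  refine le_csInf (wdist_set_nonempty hG u v) ?_
  rintro r ⟨p, rfl⟩
  calc walkWeight w q0.1 ≤ walkWeight w p.bypass :=
        hq0 ⟨p.bypass, p.bypass_isPath⟩ (Set.mem_univ _)
    _ ≤ walkWeight w p := walkWeight_bypass_le hwpos p

lemma wdist_self (hG : G.Connected) (hwpos : ∀ u v, G.Adj u v → 0 < w u v) (u : V) :
    wdist G w u u = 0 :=
  le_antisymm (by simpa [walkWeight_nil] using wdist_le_walkWeight hwpos (Walk.nil : G.Walk u u))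
    (wdist_nonneg hG hwpos u u)

lemma wdist_pos [Fintype V] (hG : G.Connected) (hwpos : ∀ u v, G.Adj u v → 0 < w u v)
    {u v : V} (huv : u ≠ v) : 0 < wdist G w u v := by
  obtain ⟨p, hp⟩ := wdist_exists hG hwpos u v
  rw [← hp]
  cases p with
  | nil => exact absurd rfl huv
  | cons h q =>
    rw [walkWeight_cons]
    have := walkWeight_nonneg hwpos q
    linarith [hwpos _ _ h]

lemma wdist_triangle_walk [Fintype V] (hG : G.Connected)
    (hwpos : ∀ u v, G.Adj u v → 0 < w u v) {u y : V} (q : G.Walk u y) (x : V) :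
    wdist G w u x ≤ walkWeight w q + wdist G w y x := by
  obtain ⟨r, hr⟩ := wdist_exists hG hwpos y x
  calc wdist G w u x ≤ walkWeight w (q.append r) := wdist_le_walkWeight hwpos _
    _ = walkWeight w q + wdist G w y x := by rw [walkWeight_append, hr]

lemma support_mem_cell [Fintype V] (hG : G.Connected)
    (hwpos : ∀ u v, G.Adj u v → 0 < w u v) (pr : V → ℕ) (S : Set V) {u v : V}
    (hu : u ∈ voronoiCell G w pr S v) (p : G.Walk u v)
    (hp : walkWeight w p = wdist G w u v) :
    ∀ y ∈ p.support, y ∈ voronoiCell G w pr S v := by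
  classical
  intro y hy x hx hxv
  set a := walkWeight w (p.takeUntil y hy) with ha
  set b := walkWeight w (p.dropUntil y hy) with hb
  have hab : a + b = wdist G w u v := by
    rw [← hp, ha, hb, ← walkWeight_append, p.take_spec hy]
  have h1 : wdist G w y v ≤ b := wdist_le_walkWeight hwpos _
  have h2 : wdist G w u x ≤ a + wdist G w y x := wdist_triangle_walk hG hwpos _ x
  rcases hu x hx hxv with hlt | ⟨heq, hpr⟩
  · left; linarith
  · have h3 : wdist G w y v ≤ wdist G w y x := by linarith
    rcases lt_or_eq_of_le h3 with h4 | h4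
    · exact Or.inl h4
    · exact Or.inr ⟨h4, hpr⟩

lemma reach_in_induce {s : Set V} :
    ∀ {u v : V} (p : G.Walk u v), (∀ y ∈ p.support, y ∈ s) →
      ∀ (hu : u ∈ s) (hv : v ∈ s), (G.induce s).Reachable ⟨u, hu⟩ ⟨v, hv⟩ := by
  intro u v p
  induction p with
  | nil => intro _ hu hv; rfl
  | @cons a b c h q ih =>
    intro hs hu hv
    have hb : b ∈ s := hs b (by simp)
    have hadj : (G.induce s).Adj ⟨a, hu⟩ ⟨b, hb⟩ := by simpa using h
    exact hadj.reachable.trans (ih (fun y hy => hs y (by simp [hy])) hb hv)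

end Aux

theorem stmt_4 {V : Type*} [Fintype V] (G : SimpleGraph V) (hG : G.Connected)
    (w : V → V → ℝ) (hwsym : ∀ u v, w u v = w v u)
    (hwpos : ∀ u v, G.Adj u v → 0 < w u v)
    (pr : V → ℕ) (hpr : Function.Injective pr)
    (S : Set V) (v : V) (hv : v ∈ S) :
    (G.induce (voronoiCell G w pr S v)).Connected := by
  classical
  have hvc : v ∈ voronoiCell G w pr S v := by
    intro x hx hxv
    left
    rw [wdist_self hG hwpos]
    exact wdist_pos hG hwpos (Ne.symm hxv)
  have key : ∀ (u : V) (hu : u ∈ voronoiCell G w pr S v),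
      (G.induce (voronoiCell G w pr S v)).Reachable ⟨u, hu⟩ ⟨v, hvc⟩ := by
    intro u hu
    obtain ⟨p, hp⟩ := wdist_exists hG hwpos u v
    exact reach_in_induce p (support_mem_cell hG hwpos pr S hu p hp) hu hvc
  rw [SimpleGraph.connected_iff]
  refine ⟨?_, ⟨⟨v, hvc⟩⟩⟩
  rintro ⟨a, ha⟩ ⟨b, hb⟩
  exact (key a ha).trans (key b hb).symm
end

section
/- Let A and B be finite sets with |A| ≥ |B|, both subsets partitioned by a common partition S₁, …, S_p of a ground set, where each part satisfies 1/(2ε²) ≤ |S_i| ≤ 1/ε² for a constant 0 < ε < 1. Then there exists a coarsening of the partition (grouping parts together) such that each group C is a union of O(1/ε⁵) parts S_i and satisfies |C ∩ A| ≥ |C ∩ B|. -/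
lemma lemG {ι : Type*} [DecidableEq ι] (d : ι → ℤ) (M : ℕ) :
    ∀ n : ℕ, ∀ s : Finset ι, ∀ p : ℤ, 0 ≤ p → p < 2*M →
      (∀ i ∈ s, |d i| ≤ (M:ℤ)) → 0 ≤ p + ∑ i ∈ s, d i →
      ∃ l : List ι, l.Nodup ∧ (∀ i ∈ l, i ∈ s) ∧ l.length ≤ n ∧
        (l.length = min n s.card ∨ ∀ i ∈ s, i ∉ l → 0 < d i) ∧
        (∀ t, t ≤ l.length → 0 ≤ p + ((l.take t).map d).sum ∧
          p + ((l.take t).map d).sum < 2*M) := by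
  intro n
  induction n with
  | zero =>
    intro s p hp0 hp2 _ _
    refine ⟨[], by simp, by simp, by simp, Or.inl (by simp), ?_⟩
    intro t ht
    simp only [List.length_nil, Nat.le_zero] at ht
    subst ht
    simpa using ⟨hp0, hp2⟩
  | succ n ih =>
    intro s p hp0 hp2 hb hsum
    by_cases hs : s = ∅
    · subst hs
      refine ⟨[], by simp, by simp, by simp, Or.inl (by simp), ?_⟩
      intro t ht
      simp only [List.length_nil, Nat.le_zero] at ht
      subst ht
      simpa using ⟨hp0, hp2⟩
    · obtain ⟨i₀, hi₀⟩ := Finset.nonempty_iff_ne_empty.2 hs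
      by_cases hc : ∃ i ∈ s, 0 ≤ p + d i ∧ p + d i < 2*(M:ℤ)
      · obtain ⟨i, hi, hpi0, hpi2⟩ := hc
        have hsum' : 0 ≤ (p + d i) + ∑ j ∈ s.erase i, d j := by
          rw [add_assoc, add_comm (d i), Finset.sum_erase_add s d hi]
          exact hsum
        obtain ⟨l, hnd, hmem, hlen, hdis, hpre⟩ :=
          ih (s.erase i) (p + d i) hpi0 hpi2
            (fun j hj => hb j (Finset.mem_of_mem_erase hj)) hsum'
        refine ⟨i :: l, ?_, ?_, ?_, ?_, ?_⟩
        · refine List.nodup_cons.2 ⟨fun h => ?_, hnd⟩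
          exact (Finset.ne_of_mem_erase (hmem i h)) rfl
        · intro j hj
          rcases List.mem_cons.1 hj with h | h
          · exact h ▸ hi
          · exact Finset.mem_of_mem_erase (hmem j h)
        · simpa using Nat.succ_le_succ hlen
        · rcases hdis with h | h
          · left
            have hc1 : 1 ≤ s.card := Finset.card_pos.2 ⟨i, hi⟩
            have : (s.erase i).card = s.card - 1 := Finset.card_erase_of_mem hi
            simp only [List.length_cons, h, this]
            omega
          · right
            intro j hj hjl
            have hji : j ≠ i := fun he => hjl (he ▸ List.mem_cons_self (a := i) (l := l))
            exact h j (Finset.mem_erase.2 ⟨hji, hj⟩) (fun hm => hjl (List.mem_cons_of_mem i hm))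
        · intro t ht
          cases t with
          | zero => simpa using ⟨hp0, hp2⟩
          | succ t' =>
            have ht' : t' ≤ l.length := by simpa using ht
            have := hpre t' ht'
            simp only [List.take_succ_cons, List.map_cons, List.sum_cons]
            constructor
            · linarith [this.1]
            · linarith [this.2]
      · refine ⟨[], by simp, by simp, by simp, Or.inr ?_, ?_⟩
        · -- claim all elements positive
          intro i hi _
          by_contra hneg
          push_neg at hneg
          have hpos : ∀ j ∈ s, ¬ (0 ≤ p + d j ∧ p + d j < 2*(M:ℤ)) := by
            intro j hj
            push_neg at hc
            intro ⟨h1, h2⟩; exact absurd h2 (not_lt.2 (le_of_not_gt (fun h2' => (by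
              exact absurd (⟨h1, h2'⟩ : _ ∧ _) (by
                have := hc j hj
                intro ⟨a, b⟩; exact absurd b (not_lt.2 (this a)))))))
          -- d i ≤ 0, so p + d i < 2M automatically; hence p + d i < 0
          have hdi : p + d i < 0 := by
            by_contra h
            push_neg at h
            exact hpos i hi ⟨h, by linarith⟩
          have hpM : p < (M:ℤ) := by
            have := (abs_le.1 (hb i hi)).1
            linarith
          -- all elements are nonpositive with p + d < 0
          have hall : ∀ j ∈ s, p + d j < 0 := by
            intro j hj
            by_contra h
            push_neg at h
            rcases le_or_gt (d j) 0 with h0 | h0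
            · exact hpos j hj ⟨h, by linarith⟩
            · have := (abs_le.1 (hb j hj)).2
              exact hpos j hj ⟨by linarith, by linarith⟩
          have h1 : ∑ j ∈ s, d j ≤ d i := by
            have : ∑ j ∈ s.erase i, d j ≤ 0 := by
              apply Finset.sum_nonpos
              intro j hj
              have := hall j (Finset.mem_of_mem_erase hj)
              have hp0' : (0:ℤ) ≤ p := hp0
              linarith
            have := Finset.sum_erase_add s d hi
            linarith
          linarith
        · intro t ht
          simp only [List.length_nil, Nat.le_zero] at ht
          subst ht
          simpa using ⟨hp0, hp2⟩

lemma lemB {ι : Type*} [DecidableEq ι] (d : ι → ℤ) (M : ℕ) (hM : 1 ≤ M)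
    (s : Finset ι) (hs : s.Nonempty)
    (hb : ∀ i ∈ s, |d i| ≤ (M:ℤ)) (hsum : 0 ≤ ∑ i ∈ s, d i) :
    ∃ Q : Finset ι, Q ⊆ s ∧ Q.Nonempty ∧ Q.card ≤ 2*M+1 ∧
      0 ≤ ∑ i ∈ Q, d i ∧ 0 ≤ ∑ i ∈ s \ Q, d i := by
  have h2M : (0:ℤ) < 2*M := by positivity
  obtain ⟨l, hnd, hmem, hlen, hdis, hpre⟩ :=
    lemG d M (2*M+1) s 0 le_rfl h2M hb (by simpa using hsum)
  have hsubl : l.toFinset ⊆ s := fun i hi => hmem i (List.mem_toFinset.1 hi)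
  have hcardl : l.toFinset.card = l.length := List.toFinset_card_of_nodup hnd
  have hsuml : ∑ i ∈ l.toFinset, d i = (l.map d).sum := List.sum_toFinset d hnd
  rcases hdis with hmin | hposrest
  · rcases le_or_gt s.card (2*M+1) with hle | hgt
    · -- l enumerates all of s
      refine ⟨s, le_refl _, hs, hle, hsum, by simp⟩
    · have hlen' : l.length = 2*M+1 := by rw [hmin]; omega
      -- pigeonhole on prefix sums
      have key : ∀ a b : ℕ, a < b → b ≤ 2*M+1 →
          ((l.take a).map d).sum = ((l.take b).map d).sum →
          ∃ Q : Finset ι, Q ⊆ s ∧ Q.Nonempty ∧ Q.card ≤ 2*M+1 ∧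
            0 ≤ ∑ i ∈ Q, d i ∧ 0 ≤ ∑ i ∈ s \ Q, d i := by
        intro a b hab hb2 heq
        set t := (l.drop a).take (b - a) with ht
        have hsub : t.Sublist l := ((l.drop a).take_sublist _).trans (l.drop_sublist a)
        have hndt : t.Nodup := hsub.nodup hnd
        have hlt : t.length = b - a := by
          rw [ht, List.length_take, List.length_drop, hlen']
          omega
        have hsplit : l.take b = l.take a ++ t := by
          rw [ht, ← List.take_add]
          congr 1
          omega
        have hsumt : (t.map d).sum = 0 := by
          have : ((l.take b).map d).sum = ((l.take a).map d).sum + (t.map d).sum := by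
            rw [hsplit, List.map_append, List.sum_append]
          omega
        have hQsub : t.toFinset ⊆ s := fun i hi => hmem i (hsub.mem (List.mem_toFinset.1 hi))
        have hQcard : t.toFinset.card = b - a := by
          rw [List.toFinset_card_of_nodup hndt, hlt]
        have hQsum : ∑ i ∈ t.toFinset, d i = 0 := by
          rw [List.sum_toFinset d hndt, hsumt]
        refine ⟨t.toFinset, hQsub, ?_, by omega, by omega, ?_⟩
        · rw [← Finset.card_pos, hQcard]; omega
        · rw [Finset.sum_sdiff_eq_sub hQsub, hQsum]
          omega
      have hmaps : ∀ t ∈ (Finset.range (2*M+2)),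
          (fun t => ((l.take t).map d).sum) t ∈ Finset.Ico (0:ℤ) (2*M) := by
        intro t htm
        have ht : t ≤ l.length := by
          simp only [Finset.mem_range] at htm; omega
        have := hpre t ht
        simp only [zero_add] at this
        exact Finset.mem_Ico.2 ⟨this.1, this.2⟩
      have hcard : (Finset.Ico (0:ℤ) (2*M)).card < (Finset.range (2*M+2)).card := by
        rw [Int.card_Ico, Finset.card_range]
        simp
      obtain ⟨a, ha, b, hbm, hab, heq⟩ :=
        Finset.exists_ne_map_eq_of_card_lt_of_maps_to hcard hmaps
      simp only [Finset.mem_range] at ha hbm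
      rcases lt_or_gt_of_ne hab with hlt | hlt
      · exact key a b hlt (by omega) heq
      · exact key b a hlt (by omega) heq.symm
  · -- remaining elements all positive
    by_cases hln : l = []
    · subst hln
      obtain ⟨i₀, hi₀⟩ := hs
      refine ⟨{i₀}, by simpa using hi₀, ⟨i₀, by simp⟩, by simp, ?_, ?_⟩
      · simp only [Finset.sum_singleton]
        exact le_of_lt (hposrest i₀ hi₀ (by simp))
      · apply Finset.sum_nonneg
        intro i hi
        have := Finset.mem_sdiff.1 hi
        exact le_of_lt (hposrest i this.1 (by simp))
    · refine ⟨l.toFinset, hsubl, ?_, by omega, ?_, ?_⟩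
      · simp [List.toFinset_nonempty_iff, hln]
      · rw [hsuml]
        have := (hpre l.length le_rfl).1
        simpa using this
      · apply Finset.sum_nonneg
        intro i hi
        have := Finset.mem_sdiff.1 hi
        exact le_of_lt (hposrest i this.1 (fun h => this.2 (List.mem_toFinset.2 h)))

lemma lemA {ι : Type*} [DecidableEq ι] (d : ι → ℤ) (M : ℕ) (hM : 1 ≤ M)
    (s : Finset ι) (hb : ∀ i ∈ s, |d i| ≤ (M:ℤ)) (hsum : 0 ≤ ∑ i ∈ s, d i) :
    ∃ P : Finset (Finset ι), (∀ i ∈ s, ∃! Q, Q ∈ P ∧ i ∈ Q) ∧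
      ∀ Q ∈ P, Q ⊆ s ∧ Q.card ≤ 2*M+1 ∧ 0 ≤ ∑ i ∈ Q, d i := by
  induction s using Finset.strongInduction with
  | _ s ih =>
    rcases Finset.eq_empty_or_nonempty s with rfl | hs
    · exact ⟨∅, by simp, by simp⟩
    · obtain ⟨Q₀, hQ₀s, hQ₀ne, hQ₀c, hQ₀sum, hrest⟩ := lemB d M hM s hs hb hsum
      have hss : s \ Q₀ ⊂ s := by
        obtain ⟨i₀, hi₀⟩ := hQ₀ne
        refine Finset.ssubset_iff_of_subset (Finset.sdiff_subset) |>.2 ⟨i₀, hQ₀s hi₀, ?_⟩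
        simp [hi₀]
      obtain ⟨P', hP'u, hP'p⟩ := ih (s \ Q₀) hss
        (fun i hi => hb i (Finset.mem_sdiff.1 hi).1) hrest
      refine ⟨insert Q₀ P', ?_, ?_⟩
      · intro i hi
        by_cases hiQ : i ∈ Q₀
        · refine ⟨Q₀, ⟨Finset.mem_insert_self _ _, hiQ⟩, ?_⟩
          rintro Q ⟨hQm, hiQ'⟩
          rcases Finset.mem_insert.1 hQm with rfl | hQP'
          · rfl
          · exact absurd hiQ (Finset.mem_sdiff.1 ((hP'p Q hQP').1 hiQ')).2
        · obtain ⟨Q', ⟨hQ'm, hiQ'⟩, huniq⟩ := hP'u i (Finset.mem_sdiff.2 ⟨hi, hiQ⟩)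
          refine ⟨Q', ⟨Finset.mem_insert_of_mem hQ'm, hiQ'⟩, ?_⟩
          rintro Q ⟨hQm, hiQ''⟩
          rcases Finset.mem_insert.1 hQm with rfl | hQP'
          · exact absurd hiQ'' hiQ
          · exact huniq Q ⟨hQP', hiQ''⟩
      · intro Q hQ
        rcases Finset.mem_insert.1 hQ with rfl | hQP'
        · exact ⟨hQ₀s, hQ₀c, hQ₀sum⟩
        · obtain ⟨h1, h2, h3⟩ := hP'p Q hQP'
          exact ⟨h1.trans Finset.sdiff_subset, h2, h3⟩


theorem stmt_9 :
    ∃ K : ℝ, 0 < K ∧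
      ∀ (Ω : Type) [inst : DecidableEq Ω] [instF : Fintype Ω] (q : ℕ)
        (S : Fin q → Finset Ω) (A B : Finset Ω) (ε : ℝ),
        0 < ε → ε < 1 →
        (∀ i j : Fin q, i ≠ j → Disjoint (S i) (S j)) →
        (Finset.univ.biUnion S = Finset.univ) →
        (∀ i : Fin q, 1 / (2 * ε ^ 2) ≤ ((S i).card : ℝ) ∧ ((S i).card : ℝ) ≤ 1 / ε ^ 2) →
        Disjoint A B → A ∪ B = Finset.univ → B.card ≤ A.card →
        ∃ P : Finset (Finset (Fin q)),
          (∀ i : Fin q, ∃! Q, Q ∈ P ∧ i ∈ Q) ∧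
          ∀ Q ∈ P, ((Q.card : ℝ) ≤ K / ε ^ 5 ∧
            ((Q.biUnion S) ∩ B).card ≤ ((Q.biUnion S) ∩ A).card) := by
  refine ⟨5, by norm_num, ?_⟩
  intro Ω inst instF q S A B ε hε0 hε1 hdisj hcover hsize hAB hABu hBA
  set d : Fin q → ℤ := fun i => ((S i ∩ A).card : ℤ) - ((S i ∩ B).card : ℤ) with hd
  have hεsq : (0:ℝ) < ε ^ 2 := by positivity
  have hinv1 : (1:ℝ) ≤ 1 / ε ^ 2 := by
    rw [le_div_iff₀ hεsq]
    nlinarith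
  set M : ℕ := ⌈1 / ε ^ 2⌉₊ with hMdef
  have hM : 1 ≤ M := by
    rw [hMdef]
    exact Nat.one_le_iff_ne_zero.2 (by
      intro h
      have := Nat.ceil_eq_zero.1 h
      linarith)
  have hcardM : ∀ i : Fin q, (S i).card ≤ M := by
    intro i
    have h1 : ((S i).card : ℝ) ≤ 1 / ε ^ 2 := (hsize i).2
    have h2 : (1 / ε ^ 2 : ℝ) ≤ (M : ℝ) := Nat.le_ceil _
    exact_mod_cast h1.trans h2
  have hb : ∀ i ∈ (Finset.univ : Finset (Fin q)), |d i| ≤ (M : ℤ) := by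
    intro i _
    have h1 : (S i ∩ A).card ≤ (S i).card := Finset.card_le_card Finset.inter_subset_left
    have h2 : (S i ∩ B).card ≤ (S i).card := Finset.card_le_card Finset.inter_subset_left
    have h3 := hcardM i
    rw [hd, abs_le]
    constructor <;> [skip; skip] <;>
      · push_cast
        omega
  have hsumA : ∑ i : Fin q, (S i ∩ A).card = A.card := by
    rw [← Finset.card_biUnion]
    · congr 1
      rw [← Finset.biUnion_inter, hcover, Finset.univ_inter]
    · intro i _ j _ hij
      exact (hdisj i j hij).mono Finset.inter_subset_left Finset.inter_subset_left
  have hsumB : ∑ i : Fin q, (S i ∩ B).card = B.card := by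
    rw [← Finset.card_biUnion]
    · congr 1
      rw [← Finset.biUnion_inter, hcover, Finset.univ_inter]
    · intro i _ j _ hij
      exact (hdisj i j hij).mono Finset.inter_subset_left Finset.inter_subset_left
  have hsum : 0 ≤ ∑ i ∈ (Finset.univ : Finset (Fin q)), d i := by
    have : ∑ i ∈ (Finset.univ : Finset (Fin q)), d i
        = (A.card : ℤ) - (B.card : ℤ) := by
      rw [hd]
      rw [Finset.sum_sub_distrib]
      rw [← Nat.cast_sum, ← Nat.cast_sum, hsumA, hsumB]
    rw [this]
    have : (B.card : ℤ) ≤ (A.card : ℤ) := by exact_mod_cast hBA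
    omega
  obtain ⟨P, hPu, hPp⟩ := lemA d M hM Finset.univ hb hsum
  refine ⟨P, fun i => hPu i (Finset.mem_univ i), ?_⟩
  intro Q hQ
  obtain ⟨-, hQc, hQsum⟩ := hPp Q hQ
  constructor
  · -- cardinality bound
    have hMlt : (M : ℝ) < 1 / ε ^ 2 + 1 := Nat.ceil_lt_add_one (by positivity)
    have hc1 : (Q.card : ℝ) ≤ 2 * (M : ℝ) + 1 := by exact_mod_cast hQc
    have hc2 : (Q.card : ℝ) ≤ 5 * (1 / ε ^ 2) := by linarith
    have hpow : ε ^ 5 ≤ ε ^ 2 :=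
      pow_le_pow_of_le_one (le_of_lt hε0) (le_of_lt hε1) (by norm_num)
    have hε5 : (0:ℝ) < ε ^ 5 := by positivity
    calc (Q.card : ℝ) ≤ 5 * (1 / ε ^ 2) := hc2
      _ = 5 / ε ^ 2 := by ring
      _ ≤ 5 / ε ^ 5 := by
          apply div_le_div_of_nonneg_left (by norm_num) hε5 hpow
  · -- balance
    have hA : (Q.biUnion S) ∩ A = Q.biUnion (fun i => S i ∩ A) := Finset.biUnion_inter _ _ _
    have hB : (Q.biUnion S) ∩ B = Q.biUnion (fun i => S i ∩ B) := Finset.biUnion_inter _ _ _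
    have hdA : ((Q.biUnion fun i => S i ∩ A).card) = ∑ i ∈ Q, (S i ∩ A).card :=
      Finset.card_biUnion (fun i _ j _ hij =>
        (hdisj i j hij).mono Finset.inter_subset_left Finset.inter_subset_left)
    have hdB : ((Q.biUnion fun i => S i ∩ B).card) = ∑ i ∈ Q, (S i ∩ B).card :=
      Finset.card_biUnion (fun i _ j _ hij =>
        (hdisj i j hij).mono Finset.inter_subset_left Finset.inter_subset_left)
    rw [hA, hB, hdA, hdB]
    have : (∑ i ∈ Q, ((S i ∩ B).card : ℤ)) ≤ ∑ i ∈ Q, ((S i ∩ A).card : ℤ) := by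
      have := hQsum
      rw [hd] at this
      rw [Finset.sum_sub_distrib] at this
      omega
    exact_mod_cast this
end
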